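/- Let d ≥ 1 and let c^2, c^3, c^4 ∈ ℂ[t] be polynomials of degree d such that the product c^2·c^3·c^4 has 3d pairwise distinct roots (equivalently, each c^i has d simple roots and the three polynomials are pairwise coprime). Then the polynomials (c^3)^5 − (c^2)^5 and (c^4)^5 − (c^2)^5 are linearly independent over ℂ. -/

import Mathlib

open Polynomial UniqueFactorizationMonoid

theorem stmt8 (d : ℕ) (hd : 1 ≤ d) (c₂ c₃ c₄ : Polynomial ℂ)
    (h₂ : c₂.natDegree = d) (h₃ : c₃.natDegree = d) (h₄ : c₄.natDegree = d)
    (β : Fin (3 * d) → ℂ) (hβinj : Function.Injective β)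
    (hβroot : ∀ i, (c₂ * c₃ * c₄).eval (β i) = 0) :
    LinearIndependent ℂ ![c₃ ^ 5 - c₂ ^ 5, c₄ ^ 5 - c₂ ^ 5] := by
  classical
  have hc₂ : c₂ ≠ 0 := fun h => by simp [h] at h₂; omega
  have hc₃ : c₃ ≠ 0 := fun h => by simp [h] at h₃; omega
  have hc₄ : c₄ ≠ 0 := fun h => by simp [h] at h₄; omega
  set p : Polynomial ℂ := c₂ * c₃ * c₄ with hp
  have hpne : p ≠ 0 := mul_ne_zero (mul_ne_zero hc₂ hc₃) hc₄
  have hpdeg : p.natDegree = 3 * d := by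
    rw [hp, natDegree_mul (mul_ne_zero hc₂ hc₃) hc₄, natDegree_mul hc₂ hc₃, h₂, h₃, h₄]; ring
  have hsub : (Finset.univ.image β) ⊆ p.roots.toFinset := by
    intro r hr
    simp only [Finset.mem_image] at hr
    obtain ⟨i, _, rfl⟩ := hr
    simp [Multiset.mem_toFinset, mem_roots, hpne, hβroot i, IsRoot]
  have hcard1 : 3 * d ≤ p.roots.toFinset.card := by
    have := Finset.card_le_card hsub
    rwa [Finset.card_image_of_injective _ hβinj, Finset.card_univ, Fintype.card_fin] at this
  have hcard2 : Multiset.card p.roots ≤ 3 * d := hpdeg ▸ p.card_roots'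
  have hnodup : p.roots.Nodup := by
    rw [← Multiset.toFinset_card_eq_card_iff_nodup]
    have := Multiset.toFinset_card_le p.roots
    omega
  have hroots : p.roots = c₂.roots + c₃.roots + c₄.roots := by
    rw [hp, roots_mul hpne, roots_mul (mul_ne_zero hc₂ hc₃)]
  have key : ∀ f g : Polynomial ℂ, f ≠ 0 → g ≠ 0 →
      f.roots + g.roots ≤ p.roots → ∀ r : ℂ, f.eval r = 0 → g.eval r = 0 → False := by
    intro f g hf hg hle r hfr hgr
    have h1 : 1 ≤ f.roots.count r := Multiset.one_le_count_iff_mem.2 (by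
      rw [mem_roots hf]; exact hfr)
    have h2 : 1 ≤ g.roots.count r := Multiset.one_le_count_iff_mem.2 (by
      rw [mem_roots hg]; exact hgr)
    have h3 : (f.roots + g.roots).count r ≤ p.roots.count r := Multiset.count_le_of_le r hle
    have h4 : p.roots.count r ≤ 1 := Multiset.nodup_iff_count_le_one.1 hnodup r
    rw [Multiset.count_add] at h3
    omega
  have h23 : ∀ r : ℂ, c₂.eval r = 0 → c₃.eval r = 0 → False := by
    intro r; apply key c₂ c₃ hc₂ hc₃ (by rw [hroots]; exact le_add_of_nonneg_right (by positivity))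
  have h24 : ∀ r : ℂ, c₂.eval r = 0 → c₄.eval r = 0 → False := by
    intro r h1 h2
    refine key c₂ c₄ hc₂ hc₄ ?_ r h1 h2
    rw [hroots]
    calc c₂.roots + c₄.roots ≤ c₂.roots + (c₃.roots + c₄.roots) :=
          add_le_add le_rfl (le_add_of_nonneg_left (by positivity))
      _ = c₂.roots + c₃.roots + c₄.roots := by rw [add_assoc]
  have h34 : ∀ r : ℂ, c₃.eval r = 0 → c₄.eval r = 0 → False := by
    intro r h1 h2
    refine key c₃ c₄ hc₃ hc₄ ?_ r h1 h2
    rw [hroots]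
    calc c₃.roots + c₄.roots ≤ c₂.roots + (c₃.roots + c₄.roots) :=
          le_add_of_nonneg_left (by positivity)
      _ = c₂.roots + c₃.roots + c₄.roots := by rw [add_assoc]
  have hdegpos : ∀ f : Polynomial ℂ, f.natDegree = d → 0 < f.degree := by
    intro f hf
    exact natDegree_pos_iff_degree_pos.1 (by omega)
  rw [LinearIndependent.pair_iff]
  intro a b hab
  by_contra hcon
  rw [not_and_or] at hcon
  rw [smul_eq_C_mul, smul_eq_C_mul] at hab
  by_cases ha : a = 0
  · have hb : b ≠ 0 := by tauto
    have h45 : c₄ ^ 5 = c₂ ^ 5 := by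
      have h0 : C b * (c₄ ^ 5 - c₂ ^ 5) = 0 := by rw [ha] at hab; simpa using hab
      have := (mul_eq_zero.1 h0).resolve_left (by simp [hb])
      linear_combination this
    obtain ⟨r, hr⟩ := Complex.exists_root (hdegpos c₂ h₂)
    have : c₄.eval r = 0 := by
      have h5 : (c₄.eval r) ^ 5 = 0 := by
        rw [← eval_pow, h45, eval_pow, hr.eq_zero]; ring
      exact pow_eq_zero_iff (by norm_num) |>.1 h5
    exact h24 r hr.eq_zero this
  by_cases hb : b = 0
  · have h35 : c₃ ^ 5 = c₂ ^ 5 := by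
      have h0 : C a * (c₃ ^ 5 - c₂ ^ 5) = 0 := by rw [hb] at hab; simpa using hab
      have := (mul_eq_zero.1 h0).resolve_left (by simp [ha])
      linear_combination this
    obtain ⟨r, hr⟩ := Complex.exists_root (hdegpos c₂ h₂)
    have : c₃.eval r = 0 := by
      have h5 : (c₃.eval r) ^ 5 = 0 := by
        rw [← eval_pow, h35, eval_pow, hr.eq_zero]; ring
      exact pow_eq_zero_iff (by norm_num) |>.1 h5
    exact h23 r hr.eq_zero this
  by_cases hab0 : a + b = 0
  · have hba : b = -a := by linear_combination hab0
    have h345 : c₃ ^ 5 = c₄ ^ 5 := by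
      have h0 : C a * (c₃ ^ 5 - c₄ ^ 5) = 0 := by
        rw [hba] at hab
        simp only [map_neg] at hab
        linear_combination hab
      have := (mul_eq_zero.1 h0).resolve_left (by simp [ha])
      linear_combination this
    obtain ⟨r, hr⟩ := Complex.exists_root (hdegpos c₃ h₃)
    have : c₄.eval r = 0 := by
      have h5 : (c₄.eval r) ^ 5 = 0 := by
        rw [← eval_pow, ← h345, eval_pow, hr.eq_zero]; ring
      exact pow_eq_zero_iff (by norm_num) |>.1 h5
    exact h34 r hr.eq_zero this
  -- Mason–Stothers case: a, b, a+b all nonzero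
  set A : Polynomial ℂ := C a * c₃ ^ 5 with hA
  set B : Polynomial ℂ := C b * c₄ ^ 5 with hB
  set D : Polynomial ℂ := -(C (a + b) * c₂ ^ 5) with hD
  have hAne : A ≠ 0 := mul_ne_zero (C_ne_zero.mpr ha) (pow_ne_zero _ hc₃)
  have hBne : B ≠ 0 := mul_ne_zero (C_ne_zero.mpr hb) (pow_ne_zero _ hc₄)
  have hDne : D ≠ 0 := by
    simp only [hD, neg_ne_zero]
    exact mul_ne_zero (C_ne_zero.mpr hab0) (pow_ne_zero _ hc₂)
  have hsum : A + B + D = 0 := by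
    simp only [hA, hB, hD, map_add]
    linear_combination hab
  have evalA : ∀ r : ℂ, A.eval r = 0 → c₃.eval r = 0 := by
    intro r h
    simp only [hA, eval_mul, eval_C, eval_pow, mul_eq_zero] at h
    exact pow_eq_zero_iff (by norm_num) |>.1 (h.resolve_left ha)
  have evalB : ∀ r : ℂ, B.eval r = 0 → c₄.eval r = 0 := by
    intro r h
    simp only [hB, eval_mul, eval_C, eval_pow, mul_eq_zero] at h
    exact pow_eq_zero_iff (by norm_num) |>.1 (h.resolve_left hb)
  have evalD : ∀ r : ℂ, D.eval r = 0 → c₂.eval r = 0 := by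
    intro r h
    simp only [hD, eval_neg, neg_eq_zero, eval_mul, eval_C, eval_pow, mul_eq_zero] at h
    exact pow_eq_zero_iff (by norm_num) |>.1 (h.resolve_left hab0)
  have cop : ∀ (f g : Polynomial ℂ), (∀ r : ℂ, f.eval r = 0 → g.eval r = 0 → False) →
      IsCoprime f g := by
    intro f g h
    rw [Polynomial.isCoprime_iff_aeval_ne_zero_of_isAlgClosed (k := ℂ) ℂ f g]
    intro r
    by_contra hc
    push_neg at hc
    exact h r hc.1 hc.2
  have hAdeg : A.natDegree = 5 * d := by
    rw [hA, natDegree_mul (C_ne_zero.mpr ha) (pow_ne_zero _ hc₃), natDegree_C, natDegree_pow,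
      h₃]
    ring
  rcases Polynomial.abc hAne hBne hDne
      (cop A B fun r h1 h2 => h34 r (evalA r h1) (evalB r h2))
      hsum with h | h
  · obtain ⟨hbound, -, -⟩ := h
    have hkne : (-(a * b * (a + b))) ≠ 0 :=
      neg_ne_zero.mpr (mul_ne_zero (mul_ne_zero ha hb) hab0)
    have hu : IsUnit (C (-(a * b * (a + b))) : Polynomial ℂ) := isUnit_C.2 hkne.isUnit
    have hassoc : Associated (p ^ 5) (A * B * D) := ⟨hu.unit, by
      rw [IsUnit.unit_spec]
      simp only [hA, hB, hD, hp, map_neg, map_mul, map_add]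
      ring⟩
    have hrad : UniqueFactorizationMonoid.radical (A * B * D) =
        UniqueFactorizationMonoid.radical p := by
      rw [← radical_eq_of_associated hassoc, radical_pow p (by norm_num : 5 ≠ 0)]
    have hle : (UniqueFactorizationMonoid.radical p).natDegree ≤ 3 * d :=
      hpdeg ▸ natDegree_le_of_dvd (radical_dvd_self (a := p)) hpne
    rw [hrad] at hbound
    omega
  · have := natDegree_eq_zero_of_derivative_eq_zero h.1
    omega
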